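/- Let $n, k$ be positive integers and $a_1,\dots,a_n$ positive integers. For each $i$, let $x^{(i)}_0,\dots,x^{(i)}_{a_i}$ and $y^{(i)}_0,\dots,y^{(i)}_{a_i}$ be elements of a commutative ring, and define band matrices $f_{2i-1}, f_{2i}$ of size $k \times (a_i+k)$ and $g_{2i-1}, g_{2i}$ of size $(a_i+k) \times k$ as in the paper: $(f_{2i-1})_{r,s} = y^{(i)}_{a_i-(s-r)}$ and $(f_{2i})_{r,s} = x^{(i)}_{a_i-(s-r)}$ for $0 \le s-r \le a_i$ (zero otherwise), $(g_{2i-1})_{r,s} = x^{(i)}_{r-s}$ and $(g_{2i})_{r,s} = y^{(i)}_{r-s}$ for $0 \le r-s \le a_i$ (zero otherwise). Let $f = [f_1 \; -f_2 \; f_3 \; -f_4 \; \cdots \; f_{2n-1} \; -f_{2n}]$ be the block-row matrix and $g$ the block-column matrix with blocks $g_1, g_2, \dots, g_{2n}$. Then $f \cdot g = 0$. -/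
import Mathlib


/-- Lemma 3.4(a): the block-row matrix `f = [f₁ -f₂ f₃ -f₄ ⋯ f₂ₙ₋₁ -f₂ₙ]` composed with the
block-column matrix `g` with blocks `g₁,…,g₂ₙ` is zero.  The column index of `f` (= row index
of `g`) is `(t : Fin n) × (Fin 2 × Fin (a t + k))`: block `t`, with `b = 0` corresponding to
the blocks `f₂ₜ₋₁`/`g₂ₜ₋₁` and `b = 1` to `f₂ₜ`/`g₂ₜ`. -/
theorem stmt_2 (R : Type*) [CommRing R] (n k : ℕ) (hn : 0 < n) (hk : 0 < k)
    (a : Fin n → ℕ) (ha : ∀ i, 0 < a i)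
    (x y : (i : Fin n) → ℤ → R)
    (f : Matrix (Fin k) ((t : Fin n) × (Fin 2 × Fin (a t + k))) R)
    (g : Matrix ((t : Fin n) × (Fin 2 × Fin (a t + k))) (Fin k) R)
    (hf : ∀ (r : Fin k) (t : Fin n) (b : Fin 2) (s : Fin (a t + k)),
      f r ⟨t, b, s⟩ =
        if 0 ≤ (s : ℤ) - (r : ℤ) ∧ (s : ℤ) - (r : ℤ) ≤ (a t : ℤ) then
          (if b = 0 then y t ((a t : ℤ) - ((s : ℤ) - (r : ℤ)))
           else - x t ((a t : ℤ) - ((s : ℤ) - (r : ℤ))))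
        else 0)
    (hg : ∀ (t : Fin n) (b : Fin 2) (s : Fin (a t + k)) (c : Fin k),
      g ⟨t, b, s⟩ c =
        if 0 ≤ (s : ℤ) - (c : ℤ) ∧ (s : ℤ) - (c : ℤ) ≤ (a t : ℤ) then
          (if b = 0 then x t ((s : ℤ) - (c : ℤ)) else y t ((s : ℤ) - (c : ℤ)))
        else 0) :
    f * g = 0 := by
  ext r c
  rw [Matrix.mul_apply, Matrix.zero_apply]
  classical
  set σ : ((t : Fin n) × (Fin 2 × Fin (a t + k))) → ((t : Fin n) × (Fin 2 × Fin (a t + k))) :=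
    fun p =>
      if h : (r : ℕ) ≤ p.2.2 ∧ (p.2.2 : ℕ) ≤ a p.1 + r ∧ (c : ℕ) ≤ p.2.2 ∧
          (p.2.2 : ℕ) ≤ a p.1 + c then
        ⟨p.1, p.2.1 + 1, ⟨a p.1 + r + c - p.2.2, by
          have := p.2.2.isLt; have := c.isLt; omega⟩⟩
      else ⟨p.1, p.2.1 + 1, p.2.2⟩ with hσ
  have σpos : ∀ (t : Fin n) (b : Fin 2) (s : Fin (a t + k)),
      ∀ h : (r : ℕ) ≤ s ∧ (s : ℕ) ≤ a t + r ∧ (c : ℕ) ≤ s ∧ (s : ℕ) ≤ a t + c,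
      σ ⟨t, b, s⟩ = ⟨t, b + 1, ⟨a t + r + c - s, by
        have := s.isLt; have := c.isLt; omega⟩⟩ := by
    intro t b s h
    rw [hσ]
    dsimp only
    rw [dif_pos h]
  have σneg : ∀ (t : Fin n) (b : Fin 2) (s : Fin (a t + k)),
      ¬ ((r : ℕ) ≤ s ∧ (s : ℕ) ≤ a t + r ∧ (c : ℕ) ≤ s ∧ (s : ℕ) ≤ a t + c) →
      σ ⟨t, b, s⟩ = ⟨t, b + 1, s⟩ := by
    intro t b s h
    rw [hσ]
    dsimp only
    rw [dif_neg h]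
  have hb2 : ∀ b : Fin 2, b + 1 + 1 = b := by decide
  have hb2' : ∀ b : Fin 2, b + 1 ≠ b := by decide
  refine Finset.sum_ninvolution σ ?_ ?_ (fun _ => Finset.mem_univ _) ?_
  · rintro ⟨t, b, s⟩
    by_cases h : (r : ℕ) ≤ s ∧ (s : ℕ) ≤ a t + r ∧ (c : ℕ) ≤ s ∧ (s : ℕ) ≤ a t + c
    · rw [σpos t b s h]
      obtain ⟨h1, h2, h3, h4⟩ := h
      rw [hf, hf, hg, hg]
      simp only [Fin.val_mk]
      have hs' : ((a t + (r : ℕ) + (c : ℕ) - (s : ℕ) : ℕ) : ℤ)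
          = (a t : ℤ) + r + c - s := by omega
      rw [hs']
      rw [if_pos (by omega : (0:ℤ) ≤ (s : ℤ) - r ∧ (s : ℤ) - r ≤ a t),
        if_pos (by omega : (0:ℤ) ≤ (s : ℤ) - c ∧ (s : ℤ) - c ≤ a t),
        if_pos (by omega : (0:ℤ) ≤ (a t : ℤ) + r + c - s - r ∧
          (a t : ℤ) + r + c - s - r ≤ a t),
        if_pos (by omega : (0:ℤ) ≤ (a t : ℤ) + r + c - s - c ∧
          (a t : ℤ) + r + c - s - c ≤ a t)]
      have e1 : (a t : ℤ) - ((a t : ℤ) + r + c - s - r) = (s : ℤ) - c := by ring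
      have e2 : (a t : ℤ) + r + c - s - c = (a t : ℤ) - ((s : ℤ) - r) := by ring
      rw [e1, e2]
      fin_cases b <;> simp <;> ring
    · rw [σneg t b s h]
      have hz : ∀ b' : Fin 2, f r ⟨t, b', s⟩ * g ⟨t, b', s⟩ c = 0 := by
        intro b'
        rw [hf, hg]
        rcases (by omega : ¬ ((0:ℤ) ≤ (s : ℤ) - r ∧ (s : ℤ) - r ≤ a t) ∨
            ¬ ((0:ℤ) ≤ (s : ℤ) - c ∧ (s : ℤ) - c ≤ a t)) with h' | h'
        · rw [if_neg h', zero_mul]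
        · rw [if_neg h', mul_zero]
      rw [hz, hz, add_zero]
  · rintro ⟨t, b, s⟩ hp heq
    by_cases h : (r : ℕ) ≤ s ∧ (s : ℕ) ≤ a t + r ∧ (c : ℕ) ≤ s ∧ (s : ℕ) ≤ a t + c
    · rw [σpos t b s h] at heq
      have := congrArg (fun q : ((t : Fin n) × (Fin 2 × Fin (a t + k))) => q.2.1) heq
      exact hb2' b this
    · rw [σneg t b s h] at heq
      have := congrArg (fun q : ((t : Fin n) × (Fin 2 × Fin (a t + k))) => q.2.1) heq
      exact hb2' b this
  · rintro ⟨t, b, s⟩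
    by_cases h : (r : ℕ) ≤ s ∧ (s : ℕ) ≤ a t + r ∧ (c : ℕ) ≤ s ∧ (s : ℕ) ≤ a t + c
    · rw [σpos t b s h]
      rw [σpos t (b+1) _ (by simp only [Fin.val_mk]; omega)]
      have : (a t + (r:ℕ) + c - (a t + r + c - (s:ℕ)) : ℕ) = (s:ℕ) := by omega
      congr 1
      refine Prod.ext (hb2 b) ?_
      apply Fin.ext
      simpa using this
    · rw [σneg t b s h, σneg t (b+1) s h]
      rw [hb2 b]
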